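/- Let x, x̃ ∈ ℝ^N with ⟨x,x⟩ = ⟨x̃,x̃⟩ = 1, ⟨x̃,x⟩ ≠ −1, ⟨Ax,x⟩ ≠ 0, A = diag(α_1,…,α_N) with distinct entries, and p, p̃ given by h p_k = 2(x̃_k+x_k)/(1+⟨x̃,x⟩) − 4α_k x_k/⟨Ax,x⟩ + 2x_k, h p̃_k = −2(x̃_k+x_k)/(1+⟨x̃,x⟩) + 2x̃_k. Define X_{kj} = x_k p_j − x_j p_k, Y_{kj} = α_k x_k p_j − α_j x_j p_k, and similarly X̃, Ỹ with (x̃,p̃). Then for each k: x̃_k² − h x̃_k p̃_k + (h²/4) Σ_{j≠k} X̃_{kj} Ỹ_{kj}/(α_j − α_k) = x_k² − h x_k p_k + (h²/4) Σ_{j≠k} X_{kj} Y_{kj}/(α_j − α_k). -/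

import Mathlib

open Finset

set_option maxHeartbeats 1000000 in
lemma adler_aux (αk αj xk xj xtk xtj s b h pk pj ptk ptj : ℝ) (hh : h ≠ 0)
    (ha : 1 + s ≠ 0) (hb : b ≠ 0) (hdd : αj - αk ≠ 0)
    (hpk : h * pk = 2 * (xtk + xk) / (1 + s) - 4 * αk * xk / b + 2 * xk)
    (hpj : h * pj = 2 * (xtj + xj) / (1 + s) - 4 * αj * xj / b + 2 * xj)
    (hptk : h * ptk = -(2 * (xtk + xk) / (1 + s)) + 2 * xtk)
    (hptj : h * ptj = -(2 * (xtj + xj) / (1 + s)) + 2 * xtj) :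
    h ^ 2 * ((xtk * ptj - xtj * ptk) * (αk * xtk * ptj - αj * xtj * ptk) / (αj - αk))
      - h ^ 2 * ((xk * pj - xj * pk) * (αk * xk * pj - αj * xj * pk) / (αj - αk))
    = (2 / (1 + s)) * (xk * xtj - xj * xtk) *
        ((2 / (1 + s)) * (xk * xtj + xj * xtk + xtj * xtk + xj * xk)
          - 2 * (xtj * xtk) + 2 * (xj * xk))
      + (4 / b) * (xj * xk) *
        ((2 / (1 + s)) * (αk * xk * xtj - αj * xj * xtk - (αj - αk) * (xj * xk))
          - 2 * ((αj - αk) * (xj * xk))) := by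
  have epk : pk = (2 * (xtk + xk) / (1 + s) - 4 * αk * xk / b + 2 * xk) / h := by
    rw [eq_div_iff hh]; linear_combination hpk
  have epj : pj = (2 * (xtj + xj) / (1 + s) - 4 * αj * xj / b + 2 * xj) / h := by
    rw [eq_div_iff hh]; linear_combination hpj
  have eptk : ptk = (-(2 * (xtk + xk) / (1 + s)) + 2 * xtk) / h := by
    rw [eq_div_iff hh]; linear_combination hptk
  have eptj : ptj = (-(2 * (xtj + xj) / (1 + s)) + 2 * xtj) / h := by
    rw [eq_div_iff hh]; linear_combination hptj
  rw [epk, epj, eptk, eptj]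
  field_simp
  ring

set_option maxHeartbeats 1000000 in
theorem adler_main_integrals (N : ℕ) (α : Fin N → ℝ)
    (hα : ∀ j k : Fin N, j ≠ k → α j ≠ α k)
    (h : ℝ) (hh : h ≠ 0) (x xt p pt : Fin N → ℝ)
    (hs1 : ∑ i, x i * x i = 1) (hs2 : ∑ i, xt i * xt i = 1)
    (h1 : (∑ i, xt i * x i) ≠ -1) (h2 : (∑ i, α i * x i * x i) ≠ 0)
    (hp : ∀ k, h * p k = 2 * (xt k + x k) / (1 + ∑ i, xt i * x i)
        - 4 * α k * x k / (∑ i, α i * x i * x i) + 2 * x k)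
    (hpt : ∀ k, h * pt k = -(2 * (xt k + x k) / (1 + ∑ i, xt i * x i)) + 2 * xt k) :
    ∀ k : Fin N,
      xt k ^ 2 - h * xt k * pt k + (h ^ 2 / 4) * ∑ j ∈ Finset.univ.erase k,
          (xt k * pt j - xt j * pt k) * (α k * xt k * pt j - α j * xt j * pt k)
            / (α j - α k)
      = x k ^ 2 - h * x k * p k + (h ^ 2 / 4) * ∑ j ∈ Finset.univ.erase k,
          (x k * p j - x j * p k) * (α k * x k * p j - α j * x j * p k)
            / (α j - α k) := by
  intro k
  set s := ∑ i, xt i * x i with hs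
  set b := ∑ i, α i * x i * x i with hb
  have ha : 1 + s ≠ 0 := fun hc => h1 (by linarith)
  have key2 :
      h ^ 2 * (∑ j ∈ Finset.univ.erase k,
          (xt k * pt j - xt j * pt k) * (α k * xt k * pt j - α j * xt j * pt k)
            / (α j - α k))
      - h ^ 2 * (∑ j ∈ Finset.univ.erase k,
          (x k * p j - x j * p k) * (α k * x k * p j - α j * x j * p k)
            / (α j - α k))
      = 4 * (-(x k ^ 2) + xt k ^ 2
          - (2 / (1 + s)) * (x k ^ 2 + xt k ^ 2 + 2 * (x k * xt k))
          + (4 / b) * (α k * x k ^ 2)) := by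
    rw [Finset.mul_sum, Finset.mul_sum, ← Finset.sum_sub_distrib]
    have e1 : ∑ j ∈ Finset.univ.erase k,
        (h ^ 2 * ((xt k * pt j - xt j * pt k) * (α k * xt k * pt j - α j * xt j * pt k)
            / (α j - α k))
         - h ^ 2 * ((x k * p j - x j * p k) * (α k * x k * p j - α j * x j * p k)
            / (α j - α k)))
        = ∑ j ∈ Finset.univ.erase k,
          ((2 / (1 + s)) * (x k * xt j - x j * xt k) *
            ((2 / (1 + s)) * (x k * xt j + x j * xt k + xt j * xt k + x j * x k)
              - 2 * (xt j * xt k) + 2 * (x j * x k))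
          + (4 / b) * (x j * x k) *
            ((2 / (1 + s)) * (α k * x k * xt j - α j * x j * xt k - (α j - α k) * (x j * x k))
              - 2 * ((α j - α k) * (x j * x k)))) := by
      refine Finset.sum_congr rfl (fun j hj => ?_)
      have hjk : j ≠ k := Finset.ne_of_mem_erase hj
      exact adler_aux (α k) (α j) (x k) (x j) (xt k) (xt j) s b h (p k) (p j) (pt k) (pt j)
        hh ha h2 (sub_ne_zero.mpr (hα j k hjk)) (hp k) (hp j) (hpt k) (hpt j)
    rw [e1]
    rw [Finset.sum_erase_eq_sub (Finset.mem_univ k)]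
    have decomp : ∀ j : Fin N,
        (2 / (1 + s)) * (x k * xt j - x j * xt k) *
            ((2 / (1 + s)) * (x k * xt j + x j * xt k + xt j * xt k + x j * x k)
              - 2 * (xt j * xt k) + 2 * (x j * x k))
          + (4 / b) * (x j * x k) *
            ((2 / (1 + s)) * (α k * x k * xt j - α j * x j * xt k - (α j - α k) * (x j * x k))
              - 2 * ((α j - α k) * (x j * x k))) =
        (-(4 / (1 + s)) * (1 / (1 + s)) * (xt k)^2 - (4 / (1 + s)) * (1 / (1 + s)) * (x k * xt k)
          - (4 / (1 + s)) * (x k * xt k) + (8 / (1 + s)) * (1 / b) * (α k * (x k)^2)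
          + (8 / b) * (α k * (x k)^2)) * (x j * x j)
        + ((4 / (1 + s)) * (1 / (1 + s)) * (x k)^2 + (4 / (1 + s)) * (1 / (1 + s)) * (x k * xt k)
          - (4 / (1 + s)) * (x k * xt k)) * (xt j * xt j)
        + ((4 / (1 + s)) * (1 / (1 + s)) * ((x k)^2 - (xt k)^2)
          + (4 / (1 + s)) * ((x k)^2 + (xt k)^2)
          + (8 / (1 + s)) * (1 / b) * (α k * (x k)^2)) * (xt j * x j)
        + (-(8 / (1 + s)) * (1 / b) * (x k * xt k) - (8 / (1 + s)) * (1 / b) * (x k)^2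
          - (8 / b) * (x k)^2) * (α j * x j * x j) := by
      intro j; ring
    rw [Finset.sum_congr rfl (fun j _ => decomp j)]
    rw [Finset.sum_add_distrib, Finset.sum_add_distrib, Finset.sum_add_distrib,
      ← Finset.mul_sum, ← Finset.mul_sum, ← Finset.mul_sum, ← Finset.mul_sum,
      hs1, hs2, ← hs, ← hb]
    field_simp
    ring
  linear_combination (1 / 4) * key2 + x k * hp k - xt k * hpt k
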